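/- Let {X_1,...,X_k} be an equal k-clustering of a multiset X of n points in ℤ^d with cluster size s = n/k, let c_1,...,c_k ∈ ℝ^d, and let S ⊆ X be a multiset of s identical points with common value x_j. Then there exists an equal k-clustering {X_1',...,X_k'} of X with X_1' = S such that ∑_{i=1}^k cost_p(X_i', c_i') ≤ ∑_{i=1}^k cost_p(X_i, c_i) + s·‖c_1 − x_j‖_p, where c_1' = x_j and c_h' = c_h for h ≥ 2. -/

import Mathlib

open Finset
open scoped ENNReal

/-- The ℓ_p norm of a real vector, for integer `p ≥ 1`. -/
noncomputable def lpNorm (p : ℕ) {d : ℕ} (x : Fin d → ℝ) : ℝ :=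
  (∑ i, |x i| ^ p) ^ ((1 : ℝ) / p)

/-- Cost of a cluster (multiset of integer points) with respect to a given center `c`. -/
noncomputable def costW (p : ℕ) {d : ℕ} (T : Multiset (Fin d → ℤ)) (c : Fin d → ℝ) : ℝ :=
  (T.map (fun x => lpNorm p (fun i => c i - (x i : ℝ)))).sum

/-- Cost of a cluster: infimum over all centers `c ∈ ℝ^d`. -/
noncomputable def clCost (p : ℕ) {d : ℕ} (T : Multiset (Fin d → ℤ)) : ℝ :=
  sInf (Set.range (costW p T))

lemma lpNorm_nonneg (p : ℕ) {d : ℕ} (x : Fin d → ℝ) : 0 ≤ lpNorm p x :=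
  Real.rpow_nonneg (Finset.sum_nonneg fun i _ => pow_nonneg (abs_nonneg _) _) _

lemma lpNorm_eq_norm {d : ℕ} (p : ℕ) (hp : 1 ≤ p) (x : Fin d → ℝ) :
    lpNorm p x = ‖(WithLp.equiv (p : ℝ≥0∞) (Fin d → ℝ)).symm x‖ := by
  haveI : Fact (1 ≤ ((p : ℕ) : ℝ≥0∞)) := ⟨by exact_mod_cast hp⟩
  rw [PiLp.norm_eq_sum (by rw [ENNReal.toReal_natCast]; exact Nat.cast_pos.mpr hp)]
  simp [lpNorm, ENNReal.toReal_natCast, Real.rpow_natCast, Real.norm_eq_abs]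

lemma lpNorm_sub_comm {d : ℕ} (p : ℕ) (a b : Fin d → ℝ) :
    lpNorm p (a - b) = lpNorm p (b - a) := by
  simp [lpNorm, Pi.sub_apply, abs_sub_comm]

lemma lpNorm_tri {d : ℕ} (p : ℕ) (hp : 1 ≤ p) (a b c : Fin d → ℝ) :
    lpNorm p (a - b) ≤ lpNorm p (a - c) + lpNorm p (c - b) := by
  haveI : Fact (1 ≤ ((p : ℕ) : ℝ≥0∞)) := ⟨by exact_mod_cast hp⟩
  rw [lpNorm_eq_norm p hp, lpNorm_eq_norm p hp, lpNorm_eq_norm p hp]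
  simp only [WithLp.equiv_symm_apply, WithLp.toLp_sub]
  rw [← dist_eq_norm, ← dist_eq_norm, ← dist_eq_norm]
  exact dist_triangle _ _ _

lemma costW_nonneg (p : ℕ) {d : ℕ} (T : Multiset (Fin d → ℤ)) (c : Fin d → ℝ) :
    0 ≤ costW p T c :=
  Multiset.sum_nonneg fun x hx => by
    obtain ⟨y, _, rfl⟩ := Multiset.mem_map.mp hx
    exact lpNorm_nonneg _ _

lemma costW_cons (p : ℕ) {d : ℕ} (a : Fin d → ℤ) (T : Multiset (Fin d → ℤ)) (c : Fin d → ℝ) :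
    costW p (a ::ₘ T) c = lpNorm p (fun i => c i - (a i : ℝ)) + costW p T c := by
  simp [costW]

lemma costW_add (p : ℕ) {d : ℕ} (T U : Multiset (Fin d → ℤ)) (c : Fin d → ℝ) :
    costW p (T + U) c = costW p T c + costW p U c := by
  simp [costW]

lemma costW_le_of_le (p : ℕ) {d : ℕ} {T U : Multiset (Fin d → ℤ)} (h : T ≤ U) (c : Fin d → ℝ) :
    costW p T c ≤ costW p U c := by
  obtain ⟨V, rfl⟩ := Multiset.le_iff_exists_add.mp h
  rw [costW_add]
  have := costW_nonneg p V c
  linarith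

lemma costW_replicate_self (p : ℕ) (hp : 1 ≤ p) {d : ℕ} (s : ℕ) (xj : Fin d → ℤ) :
    costW p (Multiset.replicate s xj) (fun j => (xj j : ℝ)) = 0 := by
  have hpe : ((p : ℝ))⁻¹ ≠ 0 := by positivity
  have h0 : lpNorm p (fun _ : Fin d => (0:ℝ)) = 0 := by
    simp [lpNorm, zero_pow (by omega : p ≠ 0), Real.zero_rpow hpe]
  simp [costW, Multiset.map_replicate, Multiset.sum_replicate, h0]

lemma sum_split {M : Type*} [AddCommMonoid M] {k : ℕ} (i0 h : Fin k) (hne : h ≠ i0)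
    (f : Fin k → M) :
    ∑ i, f i = f i0 + (f h + ∑ i ∈ (univ.erase i0).erase h, f i) := by
  rw [← Finset.add_sum_erase _ f (Finset.mem_univ i0)]
  congr 1
  rw [← Finset.add_sum_erase _ f (Finset.mem_erase.mpr ⟨hne, Finset.mem_univ h⟩)]

lemma aux_full {d k : ℕ} (p s : ℕ) (hk : 0 < k)
    (c : Fin k → Fin d → ℝ) (xj : Fin d → ℤ) (n : ℕ)
    (X : Fin k → Multiset (Fin d → ℤ)) (hcard : ∀ i, (X i).card = s)
    (hfull : (X ⟨0, hk⟩).count xj = s) :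
    ∃ X' : Fin k → Multiset (Fin d → ℤ),
      (∑ i, X' i = ∑ i, X i) ∧ (∀ i, (X' i).card = s) ∧
      X' ⟨0, hk⟩ = Multiset.replicate s xj ∧
      ∑ i ∈ univ.erase ⟨0, hk⟩, costW p (X' i) (c i) ≤
        ∑ i ∈ univ.erase ⟨0, hk⟩, costW p (X i) (c i) +
        costW p ((X ⟨0, hk⟩).filter (· ≠ xj)) (c ⟨0, hk⟩) +
        (n : ℝ) * lpNorm p (fun j => c ⟨0, hk⟩ j - (xj j : ℝ)) := by
  refine ⟨X, rfl, hcard, ?_, ?_⟩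
  · refine (Multiset.eq_replicate).mpr ⟨hcard _, fun b hb => ?_⟩
    have := Multiset.count_eq_card.mp (by rw [hfull, hcard]) b hb
    exact this.symm
  · have h1 := costW_nonneg p ((X ⟨0, hk⟩).filter (· ≠ xj)) (c ⟨0, hk⟩)
    have h2 : (0:ℝ) ≤ (n : ℝ) * lpNorm p (fun j => c ⟨0, hk⟩ j - (xj j : ℝ)) :=
      mul_nonneg (by positivity) (lpNorm_nonneg _ _)
    linarith

lemma aux {d k : ℕ} (p s : ℕ) (hp : 1 ≤ p) (hk : 0 < k)
    (c : Fin k → Fin d → ℝ) (xj : Fin d → ℤ) :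
    ∀ n (X : Fin k → Multiset (Fin d → ℤ)),
      (∀ i, (X i).card = s) →
      s ≤ Multiset.count xj (∑ i, X i) →
      s ≤ (X ⟨0, hk⟩).count xj + n →
      ∃ X' : Fin k → Multiset (Fin d → ℤ),
        (∑ i, X' i = ∑ i, X i) ∧ (∀ i, (X' i).card = s) ∧
        X' ⟨0, hk⟩ = Multiset.replicate s xj ∧
        ∑ i ∈ univ.erase ⟨0, hk⟩, costW p (X' i) (c i) ≤
          ∑ i ∈ univ.erase ⟨0, hk⟩, costW p (X i) (c i) +
          costW p ((X ⟨0, hk⟩).filter (· ≠ xj)) (c ⟨0, hk⟩) +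
          (n : ℝ) * lpNorm p (fun j => c ⟨0, hk⟩ j - (xj j : ℝ)) := by
  intro n
  induction n with
  | zero =>
    intro X hcard hcnt hfuel
    have hle : (X ⟨0, hk⟩).count xj ≤ s := (hcard _) ▸ Multiset.count_le_card _ _
    exact aux_full p s hk c xj 0 X hcard (le_antisymm hle (by omega))
  | succ n ih =>
    intro X hcard hcnt hfuel
    set i0 : Fin k := ⟨0, hk⟩ with hi0
    by_cases hfull : (X i0).count xj = s
    · exact aux_full p s hk c xj (n+1) X hcard hfull
    have hlt : (X i0).count xj < s :=
      lt_of_le_of_ne ((hcard i0) ▸ Multiset.count_le_card _ _) hfull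
    -- find y ∈ X i0 with y ≠ xj
    have hy : ∃ y ∈ X i0, y ≠ xj := by
      by_contra hno
      push_neg at hno
      have : (X i0).count xj = (X i0).card :=
        Multiset.count_eq_card.mpr fun b hb => (hno b hb).symm
      rw [hcard i0] at this; omega
    obtain ⟨y, hy_mem, hy_ne⟩ := hy
    -- find h ≠ i0 with xj ∈ X h
    have hcnt' : s ≤ ∑ i, (X i).count xj := by
      rwa [Multiset.count_sum'] at hcnt
    have hsplitc : (X i0).count xj + ∑ i ∈ univ.erase i0, (X i).count xj
        = ∑ i, (X i).count xj :=
      Finset.add_sum_erase _ (fun i => (X i).count xj) (Finset.mem_univ i0)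
    have hpos : 0 < ∑ i ∈ univ.erase i0, (X i).count xj := by omega
    have hh : ∃ h ∈ univ.erase i0, xj ∈ X h := by
      by_contra hno
      push_neg at hno
      have : ∑ i ∈ univ.erase i0, (X i).count xj = 0 :=
        Finset.sum_eq_zero fun i hi => Multiset.count_eq_zero.mpr (hno i hi)
      omega
    obtain ⟨h, hhA, hxj_mem⟩ := hh
    have hne : h ≠ i0 := (Finset.mem_erase.mp hhA).1
    set t0 := (X i0).erase y with ht0
    set th := (X h).erase xj with hth
    have hX0 : X i0 = y ::ₘ t0 := (Multiset.cons_erase hy_mem).symm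
    have hXh : X h = xj ::ₘ th := (Multiset.cons_erase hxj_mem).symm
    set X'' : Fin k → Multiset (Fin d → ℤ) :=
      Function.update (Function.update X i0 (xj ::ₘ t0)) h (y ::ₘ th) with hX''
    have hX''i0 : X'' i0 = xj ::ₘ t0 := by
      rw [hX'', Function.update_of_ne hne.symm, Function.update_self]
    have hX''h : X'' h = y ::ₘ th := by rw [hX'', Function.update_self]
    have hX''rest : ∀ i ∈ (univ.erase i0).erase h, X'' i = X i := by
      intro i hi
      have hih : i ≠ h := (Finset.mem_erase.mp hi).1
      have hii0 : i ≠ i0 := (Finset.mem_erase.mp (Finset.mem_erase.mp hi).2).1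
      rw [hX'', Function.update_of_ne hih, Function.update_of_ne hii0]
    -- cards
    have hspos : 0 < s := by omega
    have hcard'' : ∀ i, (X'' i).card = s := by
      intro i
      by_cases hi : i = h
      · rw [hi, hX''h, Multiset.card_cons, hth, Multiset.card_erase_of_mem hxj_mem, hcard h]
        exact Nat.succ_pred_eq_of_pos hspos
      by_cases hi0' : i = i0
      · rw [hi0', hX''i0, Multiset.card_cons, ht0, Multiset.card_erase_of_mem hy_mem, hcard i0]
        exact Nat.succ_pred_eq_of_pos hspos
      · rw [hX'', Function.update_of_ne hi, Function.update_of_ne hi0']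
        exact hcard i
    -- sum preserved
    have hsum'' : ∑ i, X'' i = ∑ i, X i := by
      rw [sum_split i0 h hne X'', sum_split i0 h hne X, hX''i0, hX''h,
        Finset.sum_congr rfl hX''rest]
      conv_rhs => rw [hX0, hXh]
      simp only [← Multiset.singleton_add]
      abel
    have hcnt'' : s ≤ Multiset.count xj (∑ i, X'' i) := by rw [hsum'']; exact hcnt
    have hcnti0 : (X'' i0).count xj = (X i0).count xj + 1 := by
      rw [hX''i0, Multiset.count_cons_self, ht0, Multiset.count_erase_of_ne (Ne.symm hy_ne)]
    have hfuel'' : s ≤ (X'' i0).count xj + n := by omega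
    obtain ⟨X', hsum', hcard', hrepl', hcost'⟩ := ih X'' hcard'' hcnt'' hfuel''
    refine ⟨X', hsum'.trans hsum'', hcard', hrepl', ?_⟩
    have eA'' : ∑ i ∈ univ.erase i0, costW p (X'' i) (c i)
        = costW p (y ::ₘ th) (c h) + ∑ i ∈ (univ.erase i0).erase h, costW p (X i) (c i) := by
      rw [← Finset.add_sum_erase _ (fun i => costW p (X'' i) (c i)) hhA, hX''h]
      congr 1
      exact Finset.sum_congr rfl fun i hi => by rw [hX''rest i hi]
    have eA : ∑ i ∈ univ.erase i0, costW p (X i) (c i)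
        = costW p (xj ::ₘ th) (c h) + ∑ i ∈ (univ.erase i0).erase h, costW p (X i) (c i) := by
      rw [← Finset.add_sum_erase _ (fun i => costW p (X i) (c i)) hhA, hXh]
    have hfil : (X i0).filter (· ≠ xj) = y ::ₘ t0.filter (· ≠ xj) := by
      rw [hX0, Multiset.filter_cons_of_pos (p := fun x => x ≠ xj) _ hy_ne]
    have hfil'' : (X'' i0).filter (· ≠ xj) = t0.filter (· ≠ xj) := by
      rw [hX''i0, Multiset.filter_cons_of_neg (p := fun x => x ≠ xj) _ (by simp)]
    have ef : costW p ((X i0).filter (· ≠ xj)) (c i0)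
        = lpNorm p (fun i => c i0 i - (y i : ℝ)) + costW p (t0.filter (· ≠ xj)) (c i0) := by
      rw [hfil, costW_cons]
    have ey : costW p (y ::ₘ th) (c h)
        = lpNorm p (fun i => c h i - (y i : ℝ)) + costW p th (c h) := costW_cons p y th (c h)
    have exj : costW p (xj ::ₘ th) (c h)
        = lpNorm p (fun i => c h i - (xj i : ℝ)) + costW p th (c h) := costW_cons p xj th (c h)
    have tri : lpNorm p (fun i => c h i - (y i : ℝ))
        ≤ lpNorm p (fun i => c h i - (xj i : ℝ))
          + (lpNorm p (fun j => c i0 j - (xj j : ℝ)) + lpNorm p (fun i => c i0 i - (y i : ℝ))) := by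
      have t1 := lpNorm_tri p hp (c h) (fun i => (y i : ℝ)) (fun i => (xj i : ℝ))
      have t2 := lpNorm_tri p hp (fun i => (xj i : ℝ)) (fun i => (y i : ℝ)) (c i0)
      have t3 := lpNorm_sub_comm p (fun i => (xj i : ℝ)) (c i0)
      simp only [Pi.sub_def] at t1 t2 t3
      linarith
    rw [hfil''] at hcost'
    push_cast
    linarith [hcost', eA'', eA, ef, ey, exj, tri]

/-- exchange lemma: given an equal `k`-clustering, centers `c₁,…,c_k`,
and `s` identical points with common value `xj` in `P`, one can rearrange the clustering
so that the first cluster consists exactly of these `s` copies of `xj`, increasing the cost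
(with the first center replaced by `xj`) by at most `s·‖c₁ - xj‖_p`. -/
theorem exchange_identical_points_into_first_cluster
    {d k s : ℕ} (p : ℕ) (hp : 1 ≤ p) (hk : 0 < k)
    (P : Multiset (Fin d → ℤ)) (hP : P.card = s * k)
    (X : Fin k → Multiset (Fin d → ℤ))
    (hpart : ∑ i, X i = P) (hsize : ∀ i, (X i).card = s)
    (c : Fin k → Fin d → ℝ) (xj : Fin d → ℤ)
    (hS : Multiset.replicate s xj ≤ P) :
    ∃ X' : Fin k → Multiset (Fin d → ℤ),
      (∑ i, X' i = P) ∧ (∀ i, (X' i).card = s) ∧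
      X' ⟨0, hk⟩ = Multiset.replicate s xj ∧
      (∑ i, costW p (X' i)
          (if i = (⟨0, hk⟩ : Fin k) then (fun j => (xj j : ℝ)) else c i)) ≤
        (∑ i, costW p (X i) (c i)) +
          (s : ℝ) * lpNorm p (fun j => c ⟨0, hk⟩ j - (xj j : ℝ)) := by
  have hcntP : s ≤ P.count xj := by
    have h1 := Multiset.count_le_of_le xj hS
    simpa using h1
  obtain ⟨X', hsum', hcard', hrepl', hcost'⟩ :=
    aux p s hp hk c xj s X hsize (by rw [hpart]; exact hcntP) (Nat.le_add_left s _)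
  refine ⟨X', by rw [hsum', hpart], hcard', hrepl', ?_⟩
  set i0 : Fin k := ⟨0, hk⟩ with hi0
  have split1 : (∑ i, costW p (X' i)
      (if i = i0 then (fun j => (xj j : ℝ)) else c i))
      = costW p (X' i0) (fun j => (xj j : ℝ))
        + ∑ i ∈ univ.erase i0, costW p (X' i) (c i) := by
    rw [← Finset.add_sum_erase _
      (fun i => costW p (X' i) (if i = i0 then (fun j => (xj j : ℝ)) else c i))
      (Finset.mem_univ i0), if_pos rfl]
    congr 1
    exact Finset.sum_congr rfl fun i hi => by rw [if_neg (Finset.mem_erase.mp hi).1]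
  have split2 : ∑ i, costW p (X i) (c i)
      = costW p (X i0) (c i0) + ∑ i ∈ univ.erase i0, costW p (X i) (c i) :=
    (Finset.add_sum_erase _ (fun i => costW p (X i) (c i)) (Finset.mem_univ i0)).symm
  have h0 : costW p (X' i0) (fun j => (xj j : ℝ)) = 0 := by
    rw [hrepl']; exact costW_replicate_self p hp s xj
  have hmono : costW p ((X i0).filter (· ≠ xj)) (c i0) ≤ costW p (X i0) (c i0) :=
    costW_le_of_le p (Multiset.filter_le _ _) _
  rw [split1, split2, h0]
  linarith [hcost', hmono]
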